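/- Let Γ be an irreducible lattice in a semisimple connected center-free real Lie group G without compact factors, acting on (G/Γ, m_{G/Γ}) by left translations. Fix a two-sided Borel fundamental domain X ⊂ G for Γ (a set which is a fundamental domain for both G/Γ and Γ\G), and define I: X → X by I(x) = the unique point of x⁻¹Γ ∩ X. Then I is a measurable bijection of X satisfying I(γ·x) = λ(γ,x)·I(x), where λ: Γ × X → Γ is the cocycle defined by γx ∈ X·λ(γ,x) and γ·x = γxλ(γ,x)⁻¹ denotes the induced Γ-action on X. In particular I is an automorphism of the orbit relation of the Γ-action on X ≅ G/Γ, with rearrangement cocycle α_I = λ. -/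

import Mathlib

open MeasureTheory Set

/-- Let `Γ` be a lattice in `G` and `X ⊆ G` a two-sided Borel fundamental
domain (both `X` and `X⁻¹` are fundamental domains for the right `Γ`-action). Let
`I : X → X`, `I x = x⁻¹Γ ∩ X`, and let `λ : Γ × X → Γ` be the cocycle with
`γ x ∈ X·λ(γ,x)`, so that `γ · x = γ x λ(γ,x)⁻¹` is the induced `Γ`-action on `X`. Then `I`
is a measurable bijection of `X` satisfying `I(γ · x) = λ(γ,x) · I(x)`; in particular `I` is
an automorphism of the orbit relation of `(X, Γ)` with rearrangement cocycle `α_I = λ`. -/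
theorem flip_is_orbit_relation_automorphism
    {G : Type*} [Group G] [MeasurableSpace G]
    (hmulmeas : Measurable fun p : G × G => p.1 * p.2)
    (hinvmeas : Measurable fun g : G => g⁻¹)
    (Γ : Subgroup G) [Countable Γ]
    (X : Set G) (hXmeas : MeasurableSet X)
    (hX : ∀ g : G, ∃! γ : Γ, g * (γ : G) ∈ X)
    (hX' : ∀ g : G, ∃! γ : Γ, g * (γ : G) ∈ X⁻¹)
    (I : G → G) (hI : ∀ x ∈ X, I x ∈ X ∧ ∃ γ : Γ, I x = x⁻¹ * (γ : G))
    (lam : Γ → G → Γ)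
    (hlam : ∀ (γ : Γ), ∀ x ∈ X, (γ : G) * x * ((lam γ x : Γ) : G)⁻¹ ∈ X) :
    Set.BijOn I X X ∧
    Measurable (X.restrict I) ∧
    (∀ (γ : Γ), ∀ x ∈ X,
      I ((γ : G) * x * ((lam γ x : Γ) : G)⁻¹) =
        ((lam γ x : Γ) : G) * I x * ((lam (lam γ x) (I x) : Γ) : G)⁻¹) := by
  -- If `x ∈ X` and `x⁻¹γ ∈ X`, then `I x = x⁻¹γ` (uniqueness of the right coset rep).
  have key : ∀ x ∈ X, ∀ γ : Γ, x⁻¹ * (γ : G) ∈ X → I x = x⁻¹ * (γ : G) := by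
    intro x hx γ hγ
    obtain ⟨hIx, δ, hδ⟩ := hI x hx
    obtain ⟨c, hc, hcu⟩ := hX x⁻¹
    have h1 : δ = c := hcu δ (by show x⁻¹ * (δ : G) ∈ X; rw [← hδ]; exact hIx)
    have h2 : γ = c := hcu γ hγ
    rw [hδ, h1, h2]
  -- Left coset reps in `X` are unique: if `x ∈ X`, `δ ∈ Γ`, `δx ∈ X`, then `δx = x`.
  have hleft : ∀ x ∈ X, ∀ δ : Γ, (δ : G) * x ∈ X → (δ : G) * x = x := by
    intro x hx δ hδ
    obtain ⟨c, hc, hcu⟩ := hX' x⁻¹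
    have h1 : (1 : Γ) = c := hcu 1 (by simpa [Set.mem_inv] using hx)
    have h2 : δ⁻¹ = c := hcu δ⁻¹ (by simpa [Set.mem_inv, mul_assoc] using hδ)
    have : δ = 1 := by
      have := h1.trans h2.symm
      simpa [eq_comm, inv_eq_one] using this
    simp [this]
  have hmaps : Set.MapsTo I X X := fun x hx => (hI x hx).1
  have hinj : Set.InjOn I X := by
    intro x hx y hy hxy
    obtain ⟨hIx, γ₁, h1⟩ := hI x hx
    obtain ⟨hIy, γ₂, h2⟩ := hI y hy
    have hx' : x = ((γ₁ * γ₂⁻¹ : Γ) : G) * y := by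
      have : x⁻¹ * (γ₁ : G) = y⁻¹ * (γ₂ : G) := by rw [← h1, ← h2, hxy]
      have hxinv : x⁻¹ = y⁻¹ * (γ₂ : G) * (γ₁ : G)⁻¹ := by
        rw [← this]; group
      have := congrArg (·⁻¹) hxinv
      simpa [mul_assoc] using this
    have := hleft y hy (γ₁ * γ₂⁻¹) (by rw [← hx']; exact hx)
    rw [hx', this]
  have hsurj : Set.SurjOn I X X := by
    intro y hy
    obtain ⟨γ, hγ, -⟩ := hX' y
    have hmem : ((γ : G))⁻¹ * y⁻¹ ∈ X := by
      rw [Set.mem_inv] at hγ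
      simpa [mul_inv_rev] using hγ
    refine ⟨(γ : G)⁻¹ * y⁻¹, hmem, ?_⟩
    have : I ((γ : G)⁻¹ * y⁻¹) = ((γ : G)⁻¹ * y⁻¹)⁻¹ * ((γ⁻¹ : Γ) : G) := by
      apply key _ hmem
      simpa [mul_assoc] using hy
    rw [this]; simp [mul_inv_rev, mul_assoc]
  refine ⟨⟨hmaps, hinj, hsurj⟩, ?_, ?_⟩
  · -- measurability
    intro s hs
    have heq : (X.restrict I) ⁻¹' s =
        ⋃ γ : Γ, ((fun x : X => (x : G)⁻¹ * (γ : G)) ⁻¹' X ∩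
          (fun x : X => (x : G)⁻¹ * (γ : G)) ⁻¹' s) := by
      ext x
      simp only [Set.mem_preimage, Set.restrict_apply, Set.mem_iUnion, Set.mem_inter_iff]
      constructor
      · intro h
        obtain ⟨hIx, c, hc⟩ := hI x x.2
        exact ⟨c, by rw [← hc]; exact hIx, by rw [← hc]; exact h⟩
      · rintro ⟨γ, h1, h2⟩
        show I (x : G) ∈ s
        rwa [key x x.2 γ h1]
    rw [heq]
    refine MeasurableSet.iUnion fun γ => ?_
    have hm : Measurable fun x : X => (x : G)⁻¹ * (γ : G) :=
      hmulmeas.comp ((hinvmeas.comp measurable_subtype_coe).prodMk measurable_const)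
    exact (hm hXmeas).inter (hm hs)
  · -- cocycle identity
    intro γ x hx
    obtain ⟨hIx, c, hc⟩ := hI x hx
    set y : G := (γ : G) * x * ((lam γ x : Γ) : G)⁻¹ with hy
    have hyX : y ∈ X := hlam γ x hx
    have h2 := hlam (lam γ x) (I x) hIx
    set L : Γ := lam (lam γ x) (I x) with hL
    set δ : Γ := γ * c * L⁻¹ with hδ
    have hmem : y⁻¹ * (δ : G) ∈ X := by
      have heq : y⁻¹ * (δ : G) = ((lam γ x : Γ) : G) * I x * ((L : Γ) : G)⁻¹ := by
        rw [hc]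
        simp only [hy, hδ, mul_inv_rev, inv_inv]
        push_cast
        group
      rw [heq]; exact h2
    have := key y hyX δ hmem
    rw [this, hc]
    simp only [hy, hδ, mul_inv_rev, inv_inv]
    push_cast
    group
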